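/- Being rank-1 homotopic is an equivalence relation on 1-paths in M: every 1-path is rank-1 homotopic to itself; if a 1-path γ is rank-1 homotopic to γ' then γ' is rank-1 homotopic to γ; and if γ is rank-1 homotopic to γ' and γ' is rank-1 homotopic to γ'', then γ is rank-1 homotopic to γ''. -/

import Mathlib

open scoped Manifold

variable (E : Type*) [NormedAddCommGroup E] [NormedSpace ℝ E] [FiniteDimensional ℝ E]
variable {M : Type*} [TopologicalSpace M] [ChartedSpace E M]
  [IsManifold 𝓘(ℝ, E) (⊤ : ℕ∞) M]

/-- A 1-path in `M`: a smooth map `ℝ → M` that is constant near `(-∞, 0]` and near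
`[1, ∞)` (in the sense of the `ε`-conditions). -/
def IsOnePath (γ : ℝ → M) : Prop :=
  ContMDiff 𝓘(ℝ, ℝ) 𝓘(ℝ, E) (⊤ : ℕ∞) γ ∧
    ∃ ε > (0 : ℝ), (∀ t ≤ ε, γ t = γ 0) ∧ (∀ t, 1 - ε ≤ t → γ t = γ 1)

/-- A 2-path in `M`, as a smooth map `ℝ × ℝ → M` with coordinates `(s, t)`,
constant near the boundary in each variable, whose images at `t = 0` and `t = 1`
are single points. -/
def IsTwoPath (g : ℝ × ℝ → M) : Prop :=
  ContMDiff 𝓘(ℝ, ℝ × ℝ) 𝓘(ℝ, E) (⊤ : ℕ∞) g ∧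
    (∃ ε > (0 : ℝ),
      (∀ s t, s ≤ ε → g (s, t) = g (0, t)) ∧
      (∀ s t, 1 - ε ≤ s → g (s, t) = g (1, t)) ∧
      (∀ s t, t ≤ ε → g (s, t) = g (s, 0)) ∧
      (∀ s t, 1 - ε ≤ t → g (s, t) = g (s, 1))) ∧
    (∀ s s', g (s, 0) = g (s', 0)) ∧ (∀ s s', g (s, 1) = g (s', 1))

/-- A rank-1 homotopy: a 2-path whose differential has rank at most 1 at every point. -/
def IsRank1Homotopy (h : ℝ × ℝ → M) : Prop :=
  IsTwoPath E h ∧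
    ∀ p : ℝ × ℝ,
      Module.finrank ℝ
        (LinearMap.range (mfderiv 𝓘(ℝ, ℝ × ℝ) 𝓘(ℝ, E) h p).toLinearMap) ≤ 1

/-- Two 1-paths are rank-1 homotopic if they are joined by a rank-1 homotopy. -/
def Rank1Homotopic (γ γ' : ℝ → M) : Prop :=
  ∃ h : ℝ × ℝ → M, IsRank1Homotopy E h ∧ (∀ t, h (0, t) = γ t) ∧ (∀ t, h (1, t) = γ' t)


section Aux

/-- Tangent spaces of `M` are finite dimensional. -/
instance aux_fd (x : M) : FiniteDimensional ℝ (TangentSpace 𝓘(ℝ, E) x) :=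
  ‹FiniteDimensional ℝ E›

/-- The rank of a composite differential is at most the rank of the outer one. -/
lemma aux_rank_comp {F : Type*} [NormedAddCommGroup F] [NormedSpace ℝ F]
    (h : F → M) (f : ℝ × ℝ → F) (p : ℝ × ℝ)
    (hh : MDifferentiableAt 𝓘(ℝ, F) 𝓘(ℝ, E) h (f p))
    (hf : MDifferentiableAt 𝓘(ℝ, ℝ × ℝ) 𝓘(ℝ, F) f p) :
    Module.finrank ℝ
        (LinearMap.range (mfderiv 𝓘(ℝ, ℝ × ℝ) 𝓘(ℝ, E) (h ∘ f) p).toLinearMap) ≤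
      Module.finrank ℝ
        (LinearMap.range (mfderiv 𝓘(ℝ, F) 𝓘(ℝ, E) h (f p)).toLinearMap) := by
  rw [mfderiv_comp (x := p) hh hf]
  refine Submodule.finrank_mono ?_
  rintro x ⟨y, rfl⟩
  exact ⟨_, rfl⟩

/-- A map factoring through a curve has rank at most one. -/
lemma aux_rank_line (g : ℝ → M) (hg : ContMDiff 𝓘(ℝ, ℝ) 𝓘(ℝ, E) (⊤ : ℕ∞) g)
    (f : ℝ × ℝ → ℝ) (hf : ContMDiff 𝓘(ℝ, ℝ × ℝ) 𝓘(ℝ, ℝ) (⊤ : ℕ∞) f) (p : ℝ × ℝ) :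
    Module.finrank ℝ
        (LinearMap.range (mfderiv 𝓘(ℝ, ℝ × ℝ) 𝓘(ℝ, E) (g ∘ f) p).toLinearMap) ≤ 1 := by
  refine (aux_rank_comp E g f p (hg.mdifferentiableAt (by simp))
    (hf.mdifferentiableAt (by simp))).trans ?_
  haveI : Module.Finite ℝ (TangentSpace 𝓘(ℝ, ℝ) (f p)) := Module.Finite.self ℝ
  have := LinearMap.finrank_range_le (mfderiv 𝓘(ℝ, ℝ) 𝓘(ℝ, E) g (f p)).toLinearMap
  exact this.trans_eq (Module.finrank_self ℝ)

/-- Concatenation of two homotopies. -/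
noncomputable def auxConcat {M : Type*} (h₁ h₂ : ℝ × ℝ → M) : ℝ × ℝ → M :=
  fun p => if p.1 ≤ 1 / 2 then h₁ (2 * p.1, p.2) else h₂ (2 * p.1 - 1, p.2)

lemma auxConcat_left {M : Type*} (h₁ h₂ : ℝ × ℝ → M) (p : ℝ × ℝ) (hp : p.1 ≤ 1 / 2) :
    auxConcat h₁ h₂ p = h₁ (2 * p.1, p.2) := if_pos hp

lemma auxConcat_right {M : Type*} (h₁ h₂ : ℝ × ℝ → M) (p : ℝ × ℝ) (hp : ¬ p.1 ≤ 1 / 2) :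
    auxConcat h₁ h₂ p = h₂ (2 * p.1 - 1, p.2) := if_neg hp

lemma aux_snd_smooth : ContMDiff 𝓘(ℝ, ℝ × ℝ) 𝓘(ℝ, ℝ) (⊤ : ℕ∞) (Prod.snd : ℝ × ℝ → ℝ) :=
  contMDiff_iff_contDiff.mpr contDiff_snd

end Aux

/-- Being rank-1 homotopic is an equivalence relation on 1-paths in `M`:
reflexive, symmetric and transitive. -/
theorem rank1Homotopic_isEquivalence :
    (∀ γ : ℝ → M, IsOnePath E γ → Rank1Homotopic E γ γ) ∧
    (∀ γ γ' : ℝ → M, IsOnePath E γ → IsOnePath E γ' →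
      Rank1Homotopic E γ γ' → Rank1Homotopic E γ' γ) ∧
    (∀ γ γ' γ'' : ℝ → M, IsOnePath E γ → IsOnePath E γ' → IsOnePath E γ'' →
      Rank1Homotopic E γ γ' → Rank1Homotopic E γ' γ'' → Rank1Homotopic E γ γ'') := by
  refine ⟨?_, ?_, ?_⟩
  · -- Reflexivity
    rintro γ ⟨hsm, ε, hε, h0, h1⟩
    refine ⟨γ ∘ Prod.snd,
      ⟨⟨hsm.comp aux_snd_smooth, ⟨ε, hε, fun s t _ => rfl, fun s t _ => rfl,
        fun s t ht => h0 t ht, fun s t ht => h1 t ht⟩,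
        fun s s' => rfl, fun s s' => rfl⟩,
        fun p => aux_rank_line E γ hsm Prod.snd aux_snd_smooth p⟩,
      fun t => rfl, fun t => rfl⟩
  · -- Symmetry
    rintro γ γ' _ _ ⟨h, ⟨⟨hsm, ⟨ε, hε, c1, c2, c3, c4⟩, e0, e1⟩, hrk⟩, hg, hg'⟩
    have hσ : ContMDiff 𝓘(ℝ, ℝ × ℝ) 𝓘(ℝ, ℝ × ℝ) (⊤ : ℕ∞)
        (fun p : ℝ × ℝ => (1 - p.1, p.2)) :=
      contMDiff_iff_contDiff.mpr (ContDiff.prodMk (contDiff_const.sub contDiff_fst) contDiff_snd)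
    refine ⟨h ∘ (fun p : ℝ × ℝ => (1 - p.1, p.2)),
      ⟨⟨hsm.comp hσ, ⟨ε, hε, ?_, ?_, ?_, ?_⟩, ?_, ?_⟩, ?_⟩, ?_, ?_⟩
    · intro s t hs
      show h (1 - s, t) = h (1 - 0, t)
      rw [sub_zero]
      exact c2 _ _ (by linarith)
    · intro s t hs
      show h (1 - s, t) = h (1 - 1, t)
      rw [sub_self]
      exact c1 _ _ (by linarith)
    · intro s t ht; exact c3 _ _ ht
    · intro s t ht; exact c4 _ _ ht
    · intro s s'; exact e0 _ _
    · intro s s'; exact e1 _ _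
    · intro p
      exact (aux_rank_comp E h _ p (hsm.mdifferentiableAt (by simp))
        (hσ.mdifferentiableAt (by simp))).trans (hrk _)
    · intro t
      show h (1 - 0, t) = γ' t
      rw [sub_zero]; exact hg' t
    · intro t
      show h (1 - 1, t) = γ t
      rw [sub_self]; exact hg t
  · -- Transitivity
    rintro γ γ' γ'' _ ⟨hsmγ', _⟩ _
      ⟨h₁, ⟨⟨hsm₁, ⟨ε₁, hε₁, a1, a2, a3, a4⟩, e01, e11⟩, hrk₁⟩, hg1, hg1'⟩
      ⟨h₂, ⟨⟨hsm₂, ⟨ε₂, hε₂, b1, b2, b3, b4⟩, e02, e12⟩, hrk₂⟩, hg2, hg2'⟩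
    set ε : ℝ := min (min ε₁ ε₂) (1 / 4) with hεdef
    have hε : 0 < ε := lt_min (lt_min hε₁ hε₂) (by norm_num)
    have hεε₁ : ε ≤ ε₁ := le_trans (min_le_left _ _) (min_le_left _ _)
    have hεε₂ : ε ≤ ε₂ := le_trans (min_le_left _ _) (min_le_right _ _)
    have hε4 : ε ≤ 1 / 4 := min_le_right _ _
    set h : ℝ × ℝ → M := auxConcat h₁ h₂ with hdef
    have hL₁ : ContMDiff 𝓘(ℝ, ℝ × ℝ) 𝓘(ℝ, ℝ × ℝ) (⊤ : ℕ∞)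
        (fun p : ℝ × ℝ => ((2 : ℝ) * p.1, p.2)) :=
      contMDiff_iff_contDiff.mpr (ContDiff.prodMk (contDiff_const.mul contDiff_fst) contDiff_snd)
    have hL₂ : ContMDiff 𝓘(ℝ, ℝ × ℝ) 𝓘(ℝ, ℝ × ℝ) (⊤ : ℕ∞)
        (fun p : ℝ × ℝ => ((2 : ℝ) * p.1 - 1, p.2)) :=
      contMDiff_iff_contDiff.mpr
        (ContDiff.prodMk ((contDiff_const.mul contDiff_fst).sub contDiff_const) contDiff_snd)
    -- description of h near every point
    have hmid : ∀ p : ℝ × ℝ, 1 / 2 - ε / 2 < p.1 → p.1 < 1 / 2 + ε / 2 →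
        h p = γ' p.2 := by
      intro p hp1 hp2
      by_cases hc : p.1 ≤ 1 / 2
      · rw [hdef, auxConcat_left _ _ _ hc, a2 _ _ (by linarith)]
        exact hg1' p.2
      · rw [hdef, auxConcat_right _ _ _ hc, b1 _ _ (by linarith)]
        exact hg2 p.2
    have hdesc : ∀ p : ℝ × ℝ,
        (h =ᶠ[nhds p] (h₁ ∘ fun q : ℝ × ℝ => ((2 : ℝ) * q.1, q.2))) ∨
        (h =ᶠ[nhds p] (h₂ ∘ fun q : ℝ × ℝ => ((2 : ℝ) * q.1 - 1, q.2))) ∨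
        (h =ᶠ[nhds p] (γ' ∘ Prod.snd)) := by
      intro p
      rcases lt_trichotomy p.1 (1 / 2) with hp | hp | hp
      · left
        refine Filter.eventuallyEq_of_mem
          ((isOpen_lt continuous_fst continuous_const).mem_nhds hp) ?_
        intro q hq
        exact auxConcat_left _ _ _ (le_of_lt hq)
      · right; right
        have hopen : IsOpen {q : ℝ × ℝ | 1 / 2 - ε / 2 < q.1 ∧ q.1 < 1 / 2 + ε / 2} :=
          (isOpen_lt continuous_const continuous_fst).inter
            (isOpen_lt continuous_fst continuous_const)
        refine Filter.eventuallyEq_of_mem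
          (hopen.mem_nhds ⟨by rw [hp]; linarith, by rw [hp]; linarith⟩) ?_
        intro q hq
        exact hmid q hq.1 hq.2
      · right; left
        refine Filter.eventuallyEq_of_mem
          ((isOpen_lt continuous_const continuous_fst).mem_nhds hp) ?_
        intro q hq
        exact auxConcat_right _ _ _ (not_le.mpr hq)
    have hsm : ContMDiff 𝓘(ℝ, ℝ × ℝ) 𝓘(ℝ, E) (⊤ : ℕ∞) h := by
      intro p
      rcases hdesc p with he | he | he
      · exact ((hsm₁.comp hL₁) p).congr_of_eventuallyEq he
      · exact ((hsm₂.comp hL₂) p).congr_of_eventuallyEq he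
      · exact ((hsmγ'.comp aux_snd_smooth) p).congr_of_eventuallyEq he
    have hrk : ∀ p : ℝ × ℝ,
        Module.finrank ℝ
          (LinearMap.range (mfderiv 𝓘(ℝ, ℝ × ℝ) 𝓘(ℝ, E) h p).toLinearMap) ≤ 1 := by
      intro p
      rcases hdesc p with he | he | he
      · rw [he.mfderiv_eq]
        exact (aux_rank_comp E h₁ _ p (hsm₁.mdifferentiableAt (by simp))
          (hL₁.mdifferentiableAt (by simp))).trans (hrk₁ _)
      · rw [he.mfderiv_eq]
        exact (aux_rank_comp E h₂ _ p (hsm₂.mdifferentiableAt (by simp))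
          (hL₂.mdifferentiableAt (by simp))).trans (hrk₂ _)
      · rw [he.mfderiv_eq]
        exact aux_rank_line E γ' hsmγ' Prod.snd aux_snd_smooth p
    have key0 : ∀ s : ℝ, h (s, 0) = γ' 0 := by
      intro s
      by_cases hc : s ≤ 1 / 2
      · rw [hdef, auxConcat_left h₁ h₂ (s, 0) hc]
        show h₁ (2 * s, 0) = γ' 0
        rw [e01 (2 * s) 1]; exact hg1' 0
      · rw [hdef, auxConcat_right h₁ h₂ (s, 0) hc]
        show h₂ (2 * s - 1, 0) = γ' 0
        rw [e02 (2 * s - 1) 0]; exact hg2 0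
    have key1 : ∀ s : ℝ, h (s, 1) = γ' 1 := by
      intro s
      by_cases hc : s ≤ 1 / 2
      · rw [hdef, auxConcat_left h₁ h₂ (s, 1) hc]
        show h₁ (2 * s, 1) = γ' 1
        rw [e11 (2 * s) 1]; exact hg1' 1
      · rw [hdef, auxConcat_right h₁ h₂ (s, 1) hc]
        show h₂ (2 * s - 1, 1) = γ' 1
        rw [e12 (2 * s - 1) 0]; exact hg2 1
    refine ⟨h, ⟨⟨hsm, ⟨ε / 2, by linarith, ?_, ?_, ?_, ?_⟩,
      fun s s' => by rw [key0 s, key0 s'], fun s s' => by rw [key1 s, key1 s']⟩, hrk⟩,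
      ?_, ?_⟩
    · -- s ≤ ε/2
      intro s t hs
      have hs2 : s ≤ 1 / 2 := by linarith
      rw [hdef, auxConcat_left h₁ h₂ (s, t) hs2,
        auxConcat_left h₁ h₂ (0, t) (by norm_num)]
      show h₁ (2 * s, t) = h₁ (2 * 0, t)
      rw [mul_zero, a1 _ _ (by linarith)]
    · -- 1 - ε/2 ≤ s
      intro s t hs
      have hs2 : ¬ s ≤ 1 / 2 := by push_neg; linarith
      rw [hdef, auxConcat_right h₁ h₂ (s, t) hs2,
        auxConcat_right h₁ h₂ (1, t) (by norm_num)]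
      show h₂ (2 * s - 1, t) = h₂ (2 * 1 - 1, t)
      have h21 : (2 : ℝ) * 1 - 1 = 1 := by norm_num
      rw [h21, b2 _ _ (by linarith)]
    · -- t ≤ ε/2
      intro s t ht
      by_cases hc : s ≤ 1 / 2
      · rw [hdef, auxConcat_left h₁ h₂ (s, t) hc, auxConcat_left h₁ h₂ (s, 0) hc]
        exact a3 _ _ (by linarith)
      · rw [hdef, auxConcat_right h₁ h₂ (s, t) hc, auxConcat_right h₁ h₂ (s, 0) hc]
        exact b3 _ _ (by linarith)
    · -- 1 - ε/2 ≤ t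
      intro s t ht
      by_cases hc : s ≤ 1 / 2
      · rw [hdef, auxConcat_left h₁ h₂ (s, t) hc, auxConcat_left h₁ h₂ (s, 1) hc]
        exact a4 _ _ (by linarith)
      · rw [hdef, auxConcat_right h₁ h₂ (s, t) hc, auxConcat_right h₁ h₂ (s, 1) hc]
        exact b4 _ _ (by linarith)
    · -- h (0, t) = γ t
      intro t
      rw [hdef, auxConcat_left h₁ h₂ (0, t) (by norm_num)]
      show h₁ (2 * 0, t) = γ t
      rw [mul_zero]; exact hg1 t
    · -- h (1, t) = γ'' t
      intro t
      rw [hdef, auxConcat_right h₁ h₂ (1, t) (by norm_num)]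
      show h₂ (2 * 1 - 1, t) = γ'' t
      have h21 : (2 : ℝ) * 1 - 1 = 1 := by norm_num
      rw [h21]; exact hg2' t
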